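/- For a continuously differentiable convex function f : ℝ^N → ℝ, if f(θ*) ≤ 0 and f(θ) > 0 with yᵀΓ∇f(θ) > 0 for a symmetric positive definite Γ, then the Γ-projection correction satisfies (θ - θ*)ᵀ Γ⁻¹ (Proj_Γ(θ, y, f) - Γy) ≤ 0, where Proj_Γ(θ, y, f) = Γy - Γ (∇f(θ)(∇f(θ))ᵀ)/((∇f(θ))ᵀ Γ ∇f(θ)) Γ y f(θ). -/

import Mathlib

open RealInnerProductSpace

lemma grad_inner_le_sub {N : ℕ} (f : EuclideanSpace ℝ (Fin N) → ℝ)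
    (hf : ConvexOn ℝ Set.univ f) (hf1 : ContDiff ℝ 1 f)
    (x y : EuclideanSpace ℝ (Fin N)) :
    ⟪gradient f x, y - x⟫ ≤ f y - f x := by
  have hdiff : DifferentiableAt ℝ f x := (hf1.differentiable one_ne_zero) x
  set φ : ℝ → ℝ := fun t => f (x + t • (y - x)) with hφ
  have hφconv : ConvexOn ℝ Set.univ φ := by
    have := hf.comp_affineMap (AffineMap.lineMap x y)
    simp only [Set.preimage_univ] at this
    have heq : φ = f ∘ AffineMap.lineMap x y := by
      funext t
      simp [hφ, AffineMap.lineMap_apply, add_comm]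
    rw [heq]; exact this
  have hcurve : HasDerivAt (fun t : ℝ => x + t • (y - x)) (y - x) 0 := by
    simpa using ((hasDerivAt_id (0:ℝ)).smul_const (y - x)).const_add x
  have hderiv : HasDerivAt φ (fderiv ℝ f x (y - x)) 0 := by
    have h0 : x + (0:ℝ) • (y - x) = x := by simp
    have hF := hdiff.hasFDerivAt
    rw [← h0] at hF
    simpa [hφ, Function.comp_def] using hF.comp_hasDerivAt 0 hcurve
  have hslope := hφconv.le_slope_of_hasDerivAt (Set.mem_univ 0) (Set.mem_univ 1)
    one_pos hderiv
  have hval : slope φ 0 1 = f y - f x := by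
    simp [slope_def_field, hφ]
  have hkey : fderiv ℝ f x (y - x) ≤ f y - f x := hval ▸ hslope
  have hgrad : ⟪gradient f x, y - x⟫ = fderiv ℝ f x (y - x) := by
    rw [gradient]
    exact InnerProductSpace.toDual_symm_apply
  linarith

/-- Lemma 4 (single-column case): the Γ-projection correction is dissipative. -/
theorem proj_correction_nonpos {N : ℕ} (f : EuclideanSpace ℝ (Fin N) → ℝ)
    (hf : ConvexOn ℝ Set.univ f) (hf1 : ContDiff ℝ 1 f)
    (Γ : Matrix (Fin N) (Fin N) ℝ) (hΓsym : Γ.IsSymm) (hΓpd : Γ.PosDef)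
    (θ θs y : EuclideanSpace ℝ (Fin N))
    (hθs : f θs ≤ 0) (hθ : 0 < f θ)
    (hy : 0 < ⟪y, Matrix.toEuclideanLin Γ (gradient f θ)⟫) :
    let g := gradient f θ
    let G := Matrix.toEuclideanLin Γ
    let Proj := G y - (f θ * ⟪g, G y⟫ / ⟪g, G g⟫) • G g
    ⟪θ - θs, Matrix.toEuclideanLin Γ⁻¹ (Proj - G y)⟫ ≤ 0 := by
  intro g G Proj
  -- g ≠ 0
  have hg0 : g ≠ 0 := by
    intro h
    rw [show Matrix.toEuclideanLin Γ (gradient f θ) = G g from rfl, h, map_zero,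
      inner_zero_right] at hy
    exact lt_irrefl 0 hy
  -- symmetry of Γ as a linear map
  have hsym : LinearMap.IsSymmetric G :=
    (Matrix.isHermitian_iff_isSymmetric).mp hΓpd.1
  -- ⟪g, G g⟫ > 0
  have hgGg : 0 < ⟪g, G g⟫ := by
    have := hΓpd.dotProduct_mulVec_pos (x := (WithLp.equiv 2 _) g) (by simpa using hg0)
    simpa [G, Matrix.toEuclideanLin_apply, PiLp.inner_apply, dotProduct,
      Matrix.mulVec, mul_comm, Finset.mul_sum] using this
  -- ⟪g, G y⟫ > 0
  have hgGy : 0 < ⟪g, G y⟫ := by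
    have : ⟪g, G y⟫ = ⟪y, G g⟫ := by
      rw [← hsym g y, real_inner_comm]
    rw [this]; exact hy
  set c : ℝ := f θ * ⟪g, G y⟫ / ⟪g, G g⟫ with hc
  have hcpos : 0 < c := div_pos (mul_pos hθ hgGy) hgGg
  -- simplify Proj - G y
  have hPGy : Proj - G y = (-c) • G g := by
    simp [Proj, hc]
  -- Γ⁻¹ * Γ applied
  have hinv : Matrix.toEuclideanLin Γ⁻¹ (G g) = g := by
    have hdet : IsUnit Γ.det := isUnit_iff_ne_zero.mpr (ne_of_gt hΓpd.det_pos)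
    simp only [G, Matrix.toEuclideanLin_apply]
    simp [Matrix.mulVec_mulVec, Matrix.nonsing_inv_mul Γ hdet]
  have hmain : ⟪θ - θs, Matrix.toEuclideanLin Γ⁻¹ (Proj - G y)⟫ = -c * ⟪θ - θs, g⟫ := by
    rw [hPGy, map_smul, hinv, inner_smul_right]
  rw [hmain]
  -- convexity: ⟪g, θ - θs⟫ ≥ f θ - f θs > 0
  have hconv := grad_inner_le_sub f hf hf1 θ θs
  have hpos : 0 ≤ ⟪θ - θs, g⟫ := by
    have : ⟪g, θs - θ⟫ ≤ f θs - f θ := hconv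
    have h2 : ⟪θ - θs, g⟫ = -⟪g, θs - θ⟫ := by
      rw [real_inner_comm, ← inner_neg_right]; congr 1; abel
    rw [h2]; linarith
  nlinarith
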